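/- Let X be a compact metric space, T : X → X a continuous map, and (h_n)_{n≥1} a sequence of continuous functions h_n : X → ℝ that is almost additive with respect to T with constant C > 0, and suppose lim_{n→∞} ‖h_n‖_∞/n = 0. Then for every periodic point x₀ ∈ X (i.e. T^k(x₀) = x₀ for some k ≥ 1) there exists a constant L ≥ 0 such that |h_n(x₀)| ≤ L for every n ≥ 1; explicitly, one may take L = max{|min{A − 2C, −C}|, |max{B + 2C, C}|} where A = min{h_r(x₀) : 1 ≤ r < k} and B = max{h_r(x₀) : 1 ≤ r < k}. -/

import Mathlib

open Filter Topology


lemma periodic_key {X : Type*} (T : X → X)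
    (h : ℕ → X → ℝ) (C : ℝ) (hC : 0 < C)
    (hbdd : ∀ n, BddAbove (Set.range fun x => |h n x|))
    (hAA : ∀ (x : X) (n m : ℕ), 1 ≤ n → 1 ≤ m →
      -C + h n x + h m (T^[n] x) ≤ h (n + m) x ∧
        h (n + m) x ≤ h n x + h m (T^[n] x) + C)
    (hlim : Tendsto (fun n : ℕ => (⨆ x : X, |h n x|) / (n : ℝ)) atTop (nhds 0))
    (x₀ : X) (k : ℕ) (hk : 1 ≤ k) (hper : T^[k] x₀ = x₀) :
    |h k x₀| ≤ C := by
  have hfix : ∀ m : ℕ, T^[m * k] x₀ = x₀ := by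
    intro m
    rw [mul_comm, Function.iterate_mul]
    exact Function.iterate_fixed hper m
  have claim : ∀ m : ℕ, 1 ≤ m →
      (m : ℝ) * h k x₀ - ((m : ℝ) - 1) * C ≤ h (m * k) x₀ ∧
        h (m * k) x₀ ≤ (m : ℝ) * h k x₀ + ((m : ℝ) - 1) * C := by
    intro m hm
    induction m, hm using Nat.le_induction with
    | base => simp
    | succ m hm ih =>
      have hmk : 1 ≤ m * k := Nat.one_le_iff_ne_zero.mpr (by positivity)
      have hAA' := hAA x₀ (m * k) k hmk hk
      rw [hfix m] at hAA'
      have heq : (m + 1) * k = m * k + k := by ring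
      rw [heq]
      push_cast
      constructor <;> nlinarith [ih.1, ih.2, hAA'.1, hAA'.2]
  -- the subsequence sup along multiples of k, rescaled, tends to 0
  have htend : Tendsto (fun m : ℕ => (m * k : ℕ)) atTop atTop :=
    tendsto_atTop_mono (fun m => Nat.le_mul_of_pos_right m (by omega)) tendsto_id
  have hsub : Tendsto (fun m : ℕ => (⨆ x : X, |h (m * k) x|) / ((m * k : ℕ) : ℝ))
      atTop (nhds 0) := hlim.comp htend
  have hmul : Tendsto (fun m : ℕ =>
      (⨆ x : X, |h (m * k) x|) / ((m * k : ℕ) : ℝ) * (k : ℝ)) atTop (nhds 0) := by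
    simpa using hsub.mul_const (k : ℝ)
  have hz : Tendsto (fun m : ℕ => h (m * k) x₀ / (m : ℝ)) atTop (nhds 0) := by
    apply squeeze_zero_norm' _ hmul
    filter_upwards [eventually_ge_atTop 1] with m hm
    have hm0 : (0 : ℝ) < (m : ℝ) := by exact_mod_cast hm
    have hk0 : (0 : ℝ) < (k : ℝ) := by exact_mod_cast hk
    have hle : |h (m * k) x₀| ≤ ⨆ x : X, |h (m * k) x| :=
      le_ciSup (hbdd (m * k)) x₀
    have : ‖h (m * k) x₀ / (m : ℝ)‖ = |h (m * k) x₀| / (m : ℝ) := by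
      rw [Real.norm_eq_abs, abs_div, abs_of_pos hm0]
    rw [this]
    have heq : (⨆ x : X, |h (m * k) x|) / ((m * k : ℕ) : ℝ) * (k : ℝ)
        = (⨆ x : X, |h (m * k) x|) / (m : ℝ) := by
      push_cast
      field_simp
    rw [heq]
    gcongr
  have h1 : ∀ᶠ m : ℕ in atTop, h k x₀ - C ≤ h (m * k) x₀ / (m : ℝ) := by
    filter_upwards [eventually_ge_atTop 1] with m hm
    have hm0 : (0 : ℝ) < (m : ℝ) := by exact_mod_cast hm
    have hm1 : (1 : ℝ) ≤ (m : ℝ) := by exact_mod_cast hm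
    rw [le_div_iff₀ hm0]
    nlinarith [(claim m hm).1]
  have h2 : ∀ᶠ m : ℕ in atTop, h (m * k) x₀ / (m : ℝ) ≤ h k x₀ + C := by
    filter_upwards [eventually_ge_atTop 1] with m hm
    have hm0 : (0 : ℝ) < (m : ℝ) := by exact_mod_cast hm
    have hm1 : (1 : ℝ) ≤ (m : ℝ) := by exact_mod_cast hm
    rw [div_le_iff₀ hm0]
    nlinarith [(claim m hm).2]
  have hlow : h k x₀ - C ≤ 0 := ge_of_tendsto hz h1
  have hhigh : (0 : ℝ) ≤ h k x₀ + C := le_of_tendsto hz h2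
  rw [abs_le]
  constructor <;> linarith

theorem statement3 {X : Type*} [MetricSpace X] [CompactSpace X]
    (T : X → X) (hT : Continuous T)
    (h : ℕ → X → ℝ) (hcont : ∀ n, Continuous (h n))
    (C : ℝ) (hC : 0 < C)
    (hAA : ∀ (x : X) (n m : ℕ), 1 ≤ n → 1 ≤ m →
      -C + h n x + h m (T^[n] x) ≤ h (n + m) x ∧
        h (n + m) x ≤ h n x + h m (T^[n] x) + C)
    (hlim : Tendsto (fun n : ℕ => (⨆ x : X, |h n x|) / (n : ℝ)) atTop (nhds 0))
    (x₀ : X) (k : ℕ) (hk : 1 ≤ k) (hper : T^[k] x₀ = x₀)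
    (A B : ℝ)
    (hA : A = sInf ((fun r : ℕ => h r x₀) '' {r : ℕ | 1 ≤ r ∧ r < k}))
    (hB : B = sSup ((fun r : ℕ => h r x₀) '' {r : ℕ | 1 ≤ r ∧ r < k})) :
    0 ≤ max |min (A - 2 * C) (-C)| |max (B + 2 * C) C| ∧
      ∀ (n : ℕ), 1 ≤ n →
        |h n x₀| ≤ max |min (A - 2 * C) (-C)| |max (B + 2 * C) C| := by
  have hbdd : ∀ n, BddAbove (Set.range fun x => |h n x|) := fun n =>
    (isCompact_range (hcont n).abs).bddAbove
  have key := periodic_key T h C hC hbdd hAA hlim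
  -- bounds A ≤ h r x₀ ≤ B for 1 ≤ r < k
  have hfin : ((fun r : ℕ => h r x₀) '' {r : ℕ | 1 ≤ r ∧ r < k}).Finite :=
    (Set.finite_Iio k).subset (fun r hr => hr.2) |>.image _
  have hAB : ∀ r : ℕ, 1 ≤ r → r < k → A ≤ h r x₀ ∧ h r x₀ ≤ B := by
    intro r h1 h2
    have hmem : h r x₀ ∈ (fun r : ℕ => h r x₀) '' {r : ℕ | 1 ≤ r ∧ r < k} :=
      ⟨r, ⟨h1, h2⟩, rfl⟩
    exact ⟨hA ▸ csInf_le hfin.bddBelow hmem, hB ▸ le_csSup hfin.bddAbove hmem⟩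
  -- the main per-n bound
  have main : ∀ n : ℕ, 1 ≤ n →
      min (A - 2 * C) (-C) ≤ h n x₀ ∧ h n x₀ ≤ max (B + 2 * C) C := by
    intro n hn
    have hfixq : ∀ q : ℕ, T^[q * k] x₀ = x₀ := by
      intro q
      rw [mul_comm, Function.iterate_mul]
      exact Function.iterate_fixed hper q
    obtain ⟨q, r, hr, hnqr⟩ : ∃ q r : ℕ, r < k ∧ n = q * k + r :=
      ⟨n / k, n % k, Nat.mod_lt n (by omega), (Nat.div_add_mod' n k).symm⟩
    rcases Nat.eq_zero_or_pos r with hr0 | hr1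
    · -- n = q * k, q ≥ 1
      have hq : 1 ≤ q := by
        rcases Nat.eq_zero_or_pos q with h0 | h1
        · subst h0; simp at hnqr; omega
        · exact h1
      have hper' : T^[n] x₀ = x₀ := by rw [hnqr, hr0, Nat.add_zero]; exact hfixq q
      have := key x₀ n hn hper'
      rw [abs_le] at this
      exact ⟨le_trans (min_le_right _ _) this.1, le_trans this.2 (le_max_right _ _)⟩
    · have hAB' := hAB r hr1 hr
      rcases Nat.eq_zero_or_pos q with hq0 | hq1
      · -- n = r
        have hnr : n = r := by subst hq0; simpa using hnqr
        rw [hnr]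
        constructor
        · calc min (A - 2 * C) (-C) ≤ A - 2 * C := min_le_left _ _
            _ ≤ A := by linarith
            _ ≤ h r x₀ := hAB'.1
        · calc h r x₀ ≤ B := hAB'.2
            _ ≤ B + 2 * C := by linarith
            _ ≤ max (B + 2 * C) C := le_max_left _ _
      · -- n = q*k + r with q ≥ 1
        have hqk : 1 ≤ q * k := Nat.one_le_iff_ne_zero.mpr (by positivity)
        have hAA' := hAA x₀ (q * k) r hqk hr1
        rw [hfixq q] at hAA'
        have hkey : |h (q * k) x₀| ≤ C := key x₀ (q * k) hqk (hfixq q)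
        rw [abs_le] at hkey
        rw [hnqr]
        constructor
        · have : A - 2 * C ≤ h (q * k + r) x₀ := by linarith [hAA'.1, hAB'.1, hkey.1]
          exact le_trans (min_le_left _ _) this
        · have : h (q * k + r) x₀ ≤ B + 2 * C := by linarith [hAA'.2, hAB'.2, hkey.2]
          exact le_trans this (le_max_left _ _)
  refine ⟨le_max_of_le_left (abs_nonneg _), fun n hn => ?_⟩
  obtain ⟨hlo, hhi⟩ := main n hn
  rw [abs_le]
  constructor
  · have := neg_abs_le (min (A - 2 * C) (-C))
    have h2 : -max |min (A - 2 * C) (-C)| |max (B + 2 * C) C| ≤ -|min (A - 2 * C) (-C)| := by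
      simp [le_max_left]
    linarith
  · have := le_abs_self (max (B + 2 * C) C)
    have h2 : |max (B + 2 * C) C| ≤ max |min (A - 2 * C) (-C)| |max (B + 2 * C) C| :=
      le_max_right _ _
    linarith
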